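/- (Lemma 1, absorbing boundary condition on the right.) Let b ∈ ℝ and let v : ℝ × ℝ → ℝ be C² on an open set containing the region H = {(x,t) : x ≥ b, t ≥ 0}. Assume that v_tt(x,t) = v_xx(x,t) for all (x,t) ∈ H, and that v(x,0) = 0 and v_t(x,0) = 0 for all x ≥ b. Then for every x₁ ≥ b and every t ≥ 0 one has v_x(x₁,t) + v_t(x₁,t) = 0. -/

import Mathlib

open Set

/-- Partial derivative in the first variable. -/
noncomputable def partialX (f : ℝ × ℝ → ℝ) : ℝ × ℝ → ℝ :=
  fun p => deriv (fun x => f (x, p.2)) p.1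

/-- Partial derivative in the second variable. -/
noncomputable def partialT (f : ℝ × ℝ → ℝ) : ℝ × ℝ → ℝ :=
  fun p => deriv (fun t => f (p.1, t)) p.2

/-- Lemma 1 (absorbing boundary condition on the right). -/
theorem absorbing_boundary_right (b : ℝ) (v : ℝ × ℝ → ℝ)
    (hreg : ∃ U : Set (ℝ × ℝ), IsOpen U ∧ {p : ℝ × ℝ | b ≤ p.1 ∧ 0 ≤ p.2} ⊆ U ∧
      ContDiffOn ℝ 2 v U)
    (hwave : ∀ p : ℝ × ℝ, b ≤ p.1 → 0 ≤ p.2 →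
      partialT (partialT v) p = partialX (partialX v) p)
    (hinit : ∀ x : ℝ, b ≤ x → v (x, 0) = 0 ∧ partialT v (x, 0) = 0) :
    ∀ x₁ : ℝ, b ≤ x₁ → ∀ t : ℝ, 0 ≤ t →
      partialX v (x₁, t) + partialT v (x₁, t) = 0 := by
  obtain ⟨U, hUo, hHU, hC2⟩ := hreg
  set F : ℝ × ℝ → (ℝ × ℝ) →L[ℝ] ℝ := fderiv ℝ v with hF
  -- v is differentiable on U with derivative F
  have hdv : ∀ p ∈ U, HasFDerivAt v (F p) p := fun p hp =>
    ((hC2.differentiableOn (by norm_num)).differentiableAt (hUo.mem_nhds hp)).hasFDerivAt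
  -- F is C¹ on U
  have hF1 : ContDiffOn ℝ 1 F U := hC2.fderiv_of_isOpen hUo (by norm_num)
  have hdF : ∀ p ∈ U, HasFDerivAt F (fderiv ℝ F p) p := fun p hp =>
    ((hF1.differentiableOn one_ne_zero).differentiableAt (hUo.mem_nhds hp)).hasFDerivAt
  -- partial derivatives via F
  have hcurveX : ∀ p : ℝ × ℝ, HasDerivAt (fun x : ℝ => ((x, p.2) : ℝ × ℝ)) (1, 0) p.1 :=
    fun p => HasDerivAt.prodMk (hasDerivAt_id p.1) (hasDerivAt_const p.1 p.2)
  have hcurveT : ∀ p : ℝ × ℝ, HasDerivAt (fun t : ℝ => ((p.1, t) : ℝ × ℝ)) (0, 1) p.2 :=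
    fun p => HasDerivAt.prodMk (hasDerivAt_const p.2 p.1) (hasDerivAt_id p.2)
  have hpX : ∀ p ∈ U, partialX v p = F p (1, 0) := by
    intro p hp
    have : HasDerivAt (fun x : ℝ => v (x, p.2)) (F p (1, 0)) p.1 := by
      have := (hdv p hp).comp_hasDerivAt p.1 (hcurveX p)
      exact this
    exact this.deriv
  have hpT : ∀ p ∈ U, partialT v p = F p (0, 1) := by
    intro p hp
    have : HasDerivAt (fun t : ℝ => v (p.1, t)) (F p (0, 1)) p.2 := by
      have := (hdv p hp).comp_hasDerivAt p.2 (hcurveT p)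
      exact this
    exact this.deriv
  -- derivative of s ↦ F (γ s) a along a line
  have hlin : ∀ p ∈ U, ∀ (a c : ℝ × ℝ) (γ : ℝ → ℝ × ℝ) (s : ℝ), γ s = p →
      HasDerivAt γ c s → HasDerivAt (fun s => F (γ s) a) (fderiv ℝ F p c a) s := by
    intro p hp a c γ s hγs hγ
    subst hγs
    have h1 : HasDerivAt (fun s => F (γ s)) (fderiv ℝ F (γ s) c) s := by
      have := (hdF (γ s) hp).comp_hasDerivAt s hγ
      exact this
    have := (ContinuousLinearMap.apply ℝ ℝ a).hasFDerivAt.comp_hasDerivAt s h1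
    exact this
  -- second partials via fderiv F
  have hTT : ∀ p ∈ U, partialT (partialT v) p = fderiv ℝ F p (0, 1) (0, 1) := by
    intro p hp
    have hev : (fun t : ℝ => partialT v (p.1, t)) =ᶠ[nhds p.2]
        (fun t : ℝ => F (p.1, t) (0, 1)) := by
      have hU2 : ∀ᶠ t : ℝ in nhds p.2, ((p.1, t) : ℝ × ℝ) ∈ U := by
        have hc : Continuous (fun t : ℝ => ((p.1, t) : ℝ × ℝ)) :=
          (continuous_const.prodMk continuous_id)
        exact hc.continuousAt.preimage_mem_nhds (hUo.mem_nhds (by simpa using hp))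
      filter_upwards [hU2] with t ht
      exact hpT _ ht
    have hd : HasDerivAt (fun t : ℝ => F (p.1, t) (0, 1)) (fderiv ℝ F p (0, 1) (0, 1)) p.2 :=
      hlin p hp (0, 1) (0, 1) _ p.2 rfl (hcurveT p)
    calc partialT (partialT v) p = deriv (fun t : ℝ => partialT v (p.1, t)) p.2 := rfl
      _ = deriv (fun t : ℝ => F (p.1, t) (0, 1)) p.2 := hev.deriv_eq
      _ = fderiv ℝ F p (0, 1) (0, 1) := hd.deriv
  have hXX : ∀ p ∈ U, partialX (partialX v) p = fderiv ℝ F p (1, 0) (1, 0) := by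
    intro p hp
    have hev : (fun x : ℝ => partialX v (x, p.2)) =ᶠ[nhds p.1]
        (fun x : ℝ => F (x, p.2) (1, 0)) := by
      have hU2 : ∀ᶠ x : ℝ in nhds p.1, ((x, p.2) : ℝ × ℝ) ∈ U := by
        have hc : Continuous (fun x : ℝ => ((x, p.2) : ℝ × ℝ)) :=
          (continuous_id.prodMk continuous_const)
        exact hc.continuousAt.preimage_mem_nhds (hUo.mem_nhds (by simpa using hp))
      filter_upwards [hU2] with x hx
      exact hpX _ hx
    have hd : HasDerivAt (fun x : ℝ => F (x, p.2) (1, 0)) (fderiv ℝ F p (1, 0) (1, 0)) p.1 :=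
      hlin p hp (1, 0) (1, 0) _ p.1 rfl (hcurveX p)
    calc partialX (partialX v) p = deriv (fun x : ℝ => partialX v (x, p.2)) p.1 := rfl
      _ = deriv (fun x : ℝ => F (x, p.2) (1, 0)) p.1 := hev.deriv_eq
      _ = fderiv ℝ F p (1, 0) (1, 0) := hd.deriv
  -- symmetry of second derivative
  have hsymm : ∀ p ∈ U, ∀ a c : ℝ × ℝ, fderiv ℝ F p a c = fderiv ℝ F p c a := by
    intro p hp a c
    have hev : ∀ᶠ y in nhds p, HasFDerivAt v (F y) y := by
      filter_upwards [hUo.mem_nhds hp] with y hy using hdv y hy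
    exact second_derivative_symmetric_of_eventually_of_real hev (hdF p hp) a c
  -- the wave equation in fderiv form
  have hwave' : ∀ p : ℝ × ℝ, b ≤ p.1 → 0 ≤ p.2 →
      fderiv ℝ F p (0, 1) (0, 1) = fderiv ℝ F p (1, 0) (1, 0) := by
    intro p h1 h2
    have hp : p ∈ U := hHU ⟨h1, h2⟩
    rw [← hTT p hp, ← hXX p hp]
    exact hwave p h1 h2
  -- initial condition: F (x,0) (1,1) = 0 for x ≥ b
  have h11 : ((1, 1) : ℝ × ℝ) = (1, 0) + (0, 1) := by norm_num
  have hinit2 : ∀ x : ℝ, b ≤ x → F (x, 0) (1, 1) = 0 := by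
    have hgt : ∀ x : ℝ, b < x → F (x, 0) (1, 1) = 0 := by
      intro x hx
      have hp : ((x, 0) : ℝ × ℝ) ∈ U := hHU ⟨le_of_lt hx, le_refl 0⟩
      have hX0 : partialX v (x, 0) = 0 := by
        have hev : (fun y : ℝ => v (y, 0)) =ᶠ[nhds x] (fun _ => (0 : ℝ)) := by
          filter_upwards [Ioi_mem_nhds hx] with y hy
          exact (hinit y (le_of_lt hy)).1
        calc partialX v (x, 0) = deriv (fun y : ℝ => v (y, 0)) x := rfl
          _ = deriv (fun _ : ℝ => (0 : ℝ)) x := hev.deriv_eq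
          _ = 0 := deriv_const x 0
      have hT0 : partialT v (x, 0) = 0 := (hinit x (le_of_lt hx)).2
      have : F (x, 0) (1, 1) = F (x, 0) (1, 0) + F (x, 0) (0, 1) := by
        rw [h11, map_add]
      rw [this, ← hpX _ hp, ← hpT _ hp, hX0, hT0, add_zero]
    intro x hx
    rcases eq_or_lt_of_le hx with heq | hlt
    · -- continuity argument at x = b
      subst heq
      have hp : ((b, 0) : ℝ × ℝ) ∈ U := hHU ⟨le_refl b, le_refl 0⟩
      have hcF : ContinuousAt F (b, 0) :=
        (hF1.continuousOn.continuousAt (hUo.mem_nhds hp))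
      have hcφ : ContinuousAt (fun y : ℝ => F (y, 0) (1, 1)) b := by
        have h1 : ContinuousAt (fun y : ℝ => ((y, 0) : ℝ × ℝ)) b :=
          (continuous_id.prodMk continuous_const).continuousAt
        have h2 : ContinuousAt (fun y : ℝ => F (y, 0)) b :=
          ContinuousAt.comp (g := F) (f := fun y : ℝ => ((y, 0) : ℝ × ℝ)) hcF h1
        exact ((ContinuousLinearMap.apply ℝ ℝ ((1, 1) : ℝ × ℝ)).continuous.continuousAt).comp h2
      have h1 : Filter.Tendsto (fun y : ℝ => F (y, 0) (1, 1)) (nhdsWithin b (Ioi b))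
          (nhds (F (b, 0) (1, 1))) := hcφ.continuousWithinAt.tendsto
      have h2 : Filter.Tendsto (fun y : ℝ => F (y, 0) (1, 1)) (nhdsWithin b (Ioi b))
          (nhds 0) := by
        have hev : (fun y : ℝ => F (y, 0) (1, 1)) =ᶠ[nhdsWithin b (Ioi b)]
            (fun _ => (0 : ℝ)) := by
          filter_upwards [self_mem_nhdsWithin] with y hy
          exact hgt y hy
        exact (tendsto_const_nhds.congr' hev.symm)
      exact tendsto_nhds_unique h1 h2
    · exact hgt x hlt
  -- main argument along the characteristic
  intro x₁ hx₁ t ht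
  set γ : ℝ → ℝ × ℝ := fun s => (x₁ + t - s, s) with hγdef
  set g : ℝ → ℝ := fun s => F (γ s) (1, 1) with hgdef
  have hγH : ∀ s ∈ Icc (0 : ℝ) t, b ≤ (γ s).1 ∧ 0 ≤ (γ s).2 := by
    intro s hs
    constructor
    · simp only [hγdef]
      linarith [hs.2, hx₁]
    · exact hs.1
  have hγU : ∀ s ∈ Icc (0 : ℝ) t, γ s ∈ U := fun s hs => hHU (hγH s hs)
  have hγd : ∀ s : ℝ, HasDerivAt γ (-1, 1) s := by
    intro s
    apply HasDerivAt.prodMk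
    · have h := (hasDerivAt_const s (x₁ + t)).sub (hasDerivAt_id s)
      rw [zero_sub] at h
      exact h
    · exact hasDerivAt_id s
  have hgd : ∀ s ∈ Icc (0 : ℝ) t, HasDerivAt g 0 s := by
    intro s hs
    have hp := hγU s hs
    have hd : HasDerivAt g (fderiv ℝ F (γ s) (-1, 1) (1, 1)) s :=
      hlin (γ s) hp (1, 1) (-1, 1) γ s rfl (hγd s)
    have hzero : fderiv ℝ F (γ s) (-1, 1) (1, 1) = 0 := by
      set D := fderiv ℝ F (γ s) with hD
      have hm1 : ((-1, 1) : ℝ × ℝ) = (0, 1) - (1, 0) := by norm_num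
      have e1 : D (-1, 1) (1, 1) = D (0, 1) (1, 0) + D (0, 1) (0, 1)
          - D (1, 0) (1, 0) - D (1, 0) (0, 1) := by
        rw [hm1, map_sub, h11]
        simp only [ContinuousLinearMap.sub_apply, map_add]
        ring
      rw [e1, hsymm (γ s) hp (0, 1) (1, 0),
        hwave' (γ s) (hγH s hs).1 (hγH s hs).2]
      ring
    rwa [hzero] at hd
  have hgconst : g t = g 0 := by
    have := constant_of_has_deriv_right_zero
      (f := g) (a := (0 : ℝ)) (b := t)
      (fun s hs => (hgd s hs).continuousAt.continuousWithinAt)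
      (fun s hs => ((hgd s (Ico_subset_Icc_self hs)).hasDerivWithinAt))
    exact this t (right_mem_Icc.2 ht)
  have hg0 : g 0 = 0 := by
    have : γ 0 = (x₁ + t, 0) := by simp [hγdef]
    rw [hgdef]
    simp only [this]
    exact hinit2 (x₁ + t) (by linarith)
  have hpt : ((x₁, t) : ℝ × ℝ) ∈ U := hHU ⟨hx₁, ht⟩
  have hγt : γ t = (x₁, t) := by simp [hγdef]
  calc partialX v (x₁, t) + partialT v (x₁, t)
      = F (x₁, t) (1, 0) + F (x₁, t) (0, 1) := by rw [hpX _ hpt, hpT _ hpt]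
    _ = F (x₁, t) (1, 1) := by rw [h11, map_add]
    _ = g t := by rw [hgdef]; simp only [hγt]
    _ = 0 := by rw [hgconst, hg0]
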